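/- Let g be a nonconstant polynomial with complex coefficients. Then every zero of its derivative g' lies in the convex hull of the zeros of g (Gauss–Lucas theorem). -/

import Mathlib

open Polynomial

lemma eval_deriv_multiset_prod (z : ℂ) (R : Multiset ℂ) (h : ∀ r ∈ R, z - r ≠ 0) :
    eval z (derivative (R.map (fun a => X - C a)).prod) =
      eval z (R.map (fun a => X - C a)).prod * (R.map (fun r => (z - r)⁻¹)).sum := by
  induction R using Multiset.induction with
  | empty => simp
  | cons a R ih =>
    have ha : z - a ≠ 0 := h a (Multiset.mem_cons_self a R)
    have hR : ∀ r ∈ R, z - r ≠ 0 := fun r hr => h r (Multiset.mem_cons_of_mem hr)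
    simp only [Multiset.map_cons, Multiset.prod_cons, Multiset.sum_cons, derivative_mul,
      derivative_X_sub_C, one_mul, eval_add, eval_mul, eval_sub, eval_X, eval_C, ih hR]
    field_simp

/-- Gauss–Lucas theorem: zeros of g' lie in the convex hull of the zeros of g. -/
theorem gauss_lucas (g : Polynomial ℂ) (hg : 1 ≤ g.natDegree) (z : ℂ)
    (hz : (Polynomial.derivative g).eval z = 0) :
    z ∈ convexHull ℝ (g.roots.toFinset : Set ℂ) := by
  have hg0 : g ≠ 0 := fun h => by simp [h] at hg
  by_cases hroot : g.eval z = 0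
  · exact subset_convexHull ℝ _ (by simp [Multiset.mem_toFinset, mem_roots, hg0, hroot])
  · -- z is not a root of g
    have hsplit : g = C g.leadingCoeff * (g.roots.map (fun a => X - C a)).prod :=
      (IsAlgClosed.splits g).eq_prod_roots
    set R := g.roots with hR
    have hne : ∀ r ∈ R, z - r ≠ 0 := by
      intro r hr h0
      apply hroot
      have : r = z := by linear_combination -h0
      rw [← this]
      exact (mem_roots hg0).mp hr
    have hPne : eval z (R.map (fun a => X - C a)).prod ≠ 0 := by
      rw [eval_multiset_prod]
      simp only [Multiset.map_map, Function.comp]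
      exact Multiset.prod_ne_zero (by simpa using hne)
    have hlc : g.leadingCoeff ≠ 0 := leadingCoeff_ne_zero.mpr hg0
    have hsum : (R.map (fun r => (z - r)⁻¹)).sum = 0 := by
      have hd : eval z (derivative ((R.map (fun a => X - C a)).prod)) = 0 := by
        have := hz
        rw [hsplit] at this
        simpa [derivative_mul, eval_mul, hlc] using this
      rw [eval_deriv_multiset_prod z R hne] at hd
      exact (mul_eq_zero.mp hd).resolve_left hPne
    -- conjugate and rewrite
    have hsum2 : (R.map (fun r => (‖z - r‖ ^ 2)⁻¹ • (z - r))).sum = 0 := by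
      have := congrArg (starRingEnd ℂ) hsum
      rw [map_multiset_sum, Multiset.map_map, map_zero] at this
      rw [← this]
      congr 1
      apply Multiset.map_congr rfl
      intro r hr
      simp only [Function.comp_apply, Complex.inv_def, map_inv₀, Complex.conj_conj]
      rw [Complex.normSq_eq_norm_sq]
      simp [Complex.real_smul, div_eq_inv_mul, mul_comm]
    -- turn into a finset sum
    set t := R.toFinset with ht
    set w : ℂ → ℝ := fun r => (R.count r : ℝ) * (‖z - r‖ ^ 2)⁻¹ with hw
    have hRne : R ≠ 0 := by
      have : Multiset.card R = g.natDegree := by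
        rw [hR]; exact (splits_iff_card_roots.mp (IsAlgClosed.splits g))
      intro h0; rw [h0] at this; simp at this; omega
    obtain ⟨r0, hr0⟩ := Multiset.exists_mem_of_ne_zero hRne
    have hw0 : ∀ r ∈ t, 0 ≤ w r := by
      intro r _; positivity
    have hwsum : 0 < ∑ r ∈ t, w r := by
      apply Finset.sum_pos' hw0
      refine ⟨r0, Multiset.mem_toFinset.mpr hr0, ?_⟩
      have h1 : 0 < (R.count r0 : ℝ) := by
        exact_mod_cast Multiset.count_pos.mpr hr0
      have h2 : (0:ℝ) < (‖z - r0‖ ^ 2)⁻¹ :=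
        inv_pos.mpr (pow_pos (norm_pos_iff.mpr (hne r0 hr0)) 2)
      exact mul_pos h1 h2
    have hfin : ∑ r ∈ t, w r • (z - r) = 0 := by
      rw [← hsum2, Finset.sum_multiset_map_count]
      apply Finset.sum_congr rfl
      intro r _
      rw [hw, mul_smul]
      simp [← Nat.cast_smul_eq_nsmul ℝ]
    have hzeq : (∑ r ∈ t, w r) • z = ∑ r ∈ t, w r • r := by
      have := hfin
      simp only [smul_sub, Finset.sum_sub_distrib, sub_eq_zero] at this
      rw [Finset.sum_smul]; exact this
    have : t.centerMass w id = z := by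
      rw [Finset.centerMass]
      simp only [id_eq]
      rw [← hzeq, smul_smul, inv_mul_cancel₀ hwsum.ne', one_smul]
    rw [← this]
    exact Finset.centerMass_mem_convexHull t hw0 hwsum (fun i hi => by simpa using hi)
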